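/- Let α, τ, ξ be real numbers with 0 < α < 1/2, ξ > 0 and 0 < τ < α. Then arg T_s ≠ arg T_B, where arg denotes the principal argument with values in (−π, π]. -/

import Mathlib

open Complex Finset Filter Topology

/-- The term `T_s` of the generalised Fredholm symbol on the segment `Γ₁`. -/
noncomputable def Ts (α τ ξ : ℝ) : ℂ :=
  Complex.sin ((Real.pi : ℂ) * (1 - (τ : ℂ) + (α : ℂ) - Complex.I * (ξ : ℂ))) /
    Complex.sin ((Real.pi : ℂ) * (1 - (τ : ℂ) + 2 * (α : ℂ) - Complex.I * (ξ : ℂ)))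

/-- The term `T_B` of the generalised Fredholm symbol on the segment `Γ₁`. -/
noncomputable def TB (α τ ξ : ℝ) : ℂ :=
  Complex.sin ((Real.pi : ℂ) * (α : ℂ)) / (Real.pi : ℂ) *
      Complex.Gamma ((τ : ℂ) - 2 * (α : ℂ) + 1 + Complex.I * (ξ : ℂ)) *
      Complex.Gamma (2 * (α : ℂ)) /
    Complex.Gamma ((τ : ℂ) + 1 + Complex.I * (ξ : ℂ))


lemma arctan_diff {xi c z : ℝ} (hxi : 0 < xi) (hc : 0 < c) (hz : 0 < z) :
    Real.arctan (xi / z) - Real.arctan (xi / (z + c))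
      = Real.arctan (xi * c / (z * (z + c) + xi ^ 2)) := by
  have hzc : 0 < z + c := by linarith
  have h1 : (xi / z) * (-(xi / (z + c))) < 1 := by
    have : 0 < (xi / z) * (xi / (z + c)) := by positivity
    nlinarith
  have h2 := Real.arctan_add h1
  rw [Real.arctan_neg] at h2
  have h3 : (xi / z + -(xi / (z + c))) / (1 - xi / z * -(xi / (z + c)))
      = xi * c / (z * (z + c) + xi ^ 2) := by
    rw [div_eq_div_iff]
    · field_simp
      ring
    · have hp : 0 < xi / z * (xi / (z + c)) := by positivity
      nlinarith
    · positivity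
  rw [h3] at h2
  linarith [h2]

lemma arctan_diff_strict {xi c x y : ℝ} (hxi : 0 < xi) (hc : 0 < c) (hx : 0 < x)
    (hxy : x < y) :
    Real.arctan (xi / y) - Real.arctan (xi / (y + c))
      < Real.arctan (xi / x) - Real.arctan (xi / (x + c)) := by
  have hy : 0 < y := hx.trans hxy
  rw [arctan_diff hxi hc hx, arctan_diff hxi hc hy]
  apply Real.arctan_strictMono
  apply div_lt_div_of_pos_left (by positivity) (by positivity)
  nlinarith

lemma arctan_div_anti {xi x y : ℝ} (hxi : 0 ≤ xi) (hx : 0 < x) (hxy : x ≤ y) :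
    Real.arctan (xi / y) ≤ Real.arctan (xi / x) := by
  apply Real.arctan_strictMono.monotone
  apply div_le_div_of_nonneg_left hxi hx hxy

lemma polar_factor (x y : ℝ) (hx : 0 < x) :
    ∃ r : ℝ, 0 < r ∧ (x : ℂ) + y * Complex.I
      = (r : ℂ) * Complex.exp ((Real.arctan (y / x) : ℝ) * Complex.I) := by
  refine ⟨Real.sqrt (x ^ 2 + y ^ 2), by positivity, ?_⟩
  have hs : (0:ℝ) < Real.sqrt (x ^ 2 + y ^ 2) := by positivity
  have h1 : Real.sqrt (1 + (y / x) ^ 2) = Real.sqrt (x ^ 2 + y ^ 2) / x := by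
    have e : 1 + (y / x) ^ 2 = (x ^ 2 + y ^ 2) / x ^ 2 := by
      field_simp
    rw [e, Real.sqrt_div (by positivity), Real.sqrt_sq hx.le]
  have hsne : Real.sqrt (x ^ 2 + y ^ 2) ≠ 0 := hs.ne'
  have hcos : Real.cos (Real.arctan (y / x)) = x / Real.sqrt (x ^ 2 + y ^ 2) := by
    rw [Real.cos_arctan, h1]
    field_simp
  have hsin : Real.sin (Real.arctan (y / x)) = y / Real.sqrt (x ^ 2 + y ^ 2) := by
    rw [Real.sin_arctan, h1]
    field_simp
  have hs' : ((Real.sqrt (x ^ 2 + y ^ 2) : ℝ) : ℂ) ≠ 0 := by exact_mod_cast hsne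
  rw [Complex.exp_mul_I, ← Complex.ofReal_cos, ← Complex.ofReal_sin, hcos, hsin]
  push_cast
  field_simp

lemma polar_mul {z w : ℂ} {r s t u : ℝ} (hz : z = (r:ℂ) * Complex.exp ((t:ℝ) * Complex.I))
    (hw : w = (s:ℂ) * Complex.exp ((u:ℝ) * Complex.I)) :
    z * w = ((r * s : ℝ) : ℂ) * Complex.exp (((t + u : ℝ) : ℂ) * Complex.I) := by
  subst hz hw
  push_cast
  rw [add_mul, Complex.exp_add]
  ring

lemma polar_div {z w : ℂ} {r s t u : ℝ} (hz : z = (r:ℂ) * Complex.exp ((t:ℝ) * Complex.I))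
    (hw : w = (s:ℂ) * Complex.exp ((u:ℝ) * Complex.I)) :
    z / w = ((r / s : ℝ) : ℂ) * Complex.exp (((t - u : ℝ) : ℂ) * Complex.I) := by
  subst hz hw
  push_cast
  rw [sub_mul, Complex.exp_sub, div_mul_div_comm]

lemma polar_re (r t : ℝ) : ((r:ℂ) * Complex.exp ((t:ℝ) * Complex.I)).re = r * Real.cos t := by
  rw [Complex.exp_mul_I, ← Complex.ofReal_cos, ← Complex.ofReal_sin]
  simp [Complex.mul_re, Complex.cos_ofReal_re, Complex.sin_ofReal_re]

lemma polar_im (r t : ℝ) : ((r:ℂ) * Complex.exp ((t:ℝ) * Complex.I)).im = r * Real.sin t := by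
  rw [Complex.exp_mul_I, ← Complex.ofReal_cos, ← Complex.ofReal_sin]
  simp [Complex.mul_im, Complex.cos_ofReal_re, Complex.sin_ofReal_re]
noncomputable def uu1 (α τ ξ : ℝ) : ℂ := ((α - τ : ℝ) : ℂ) - (ξ : ℝ) * Complex.I
noncomputable def uu2 (α τ ξ : ℝ) : ℂ := ((2*α - τ : ℝ) : ℂ) - (ξ : ℝ) * Complex.I
noncomputable def vv3 (α τ ξ : ℝ) : ℂ := ((1 - α + τ : ℝ) : ℂ) + (ξ : ℝ) * Complex.I
noncomputable def vv4 (α τ ξ : ℝ) : ℂ := ((1 + τ : ℝ) : ℂ) + (ξ : ℝ) * Complex.I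

noncomputable def qq (α τ ξ : ℝ) (k : ℕ) : ℂ :=
  ((uu1 α τ ξ + k) * (vv3 α τ ξ + k) * (((2*α : ℝ) : ℂ) + k) * ((1 : ℂ) + k)) /
  ((uu2 α τ ξ + k) * (vv4 α τ ξ + k) * (((α : ℝ) : ℂ) + k) * (((1 - α : ℝ) : ℂ) + k))

noncomputable def phi (α τ ξ : ℝ) (k : ℕ) : ℝ :=
  Real.arctan (ξ / (2*α - τ + k)) + Real.arctan (ξ / (1 - α + τ + k))
    - Real.arctan (ξ / (α - τ + k)) - Real.arctan (ξ / (1 + τ + k))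

section main
variable {α τ ξ : ℝ}

lemma qq_polar (hα : 0 < α) (hα' : α < 1/2) (hξ : 0 < ξ) (hτ : 0 < τ) (hτ' : τ < α)
    (k : ℕ) : ∃ r : ℝ, 0 < r ∧ qq α τ ξ k
      = (r : ℂ) * Complex.exp ((phi α τ ξ k : ℝ) * Complex.I) := by
  have hk : (0:ℝ) ≤ (k:ℝ) := Nat.cast_nonneg k
  have p1 : (0:ℝ) < α - τ + k := by linarith
  have p2 : (0:ℝ) < 2*α - τ + k := by linarith
  have p3 : (0:ℝ) < 1 - α + τ + k := by linarith
  have p4 : (0:ℝ) < 1 + τ + k := by linarith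
  have p5 : (0:ℝ) < 2*α + k := by linarith
  have p6 : (0:ℝ) < 1 + k := by linarith
  have p7 : (0:ℝ) < α + k := by linarith
  have p8 : (0:ℝ) < 1 - α + k := by linarith
  obtain ⟨r1, hr1, e1⟩ := polar_factor (α - τ + k) (-ξ) p1
  obtain ⟨r2, hr2, e2⟩ := polar_factor (1 - α + τ + k) ξ p3
  obtain ⟨r3, hr3, e3⟩ := polar_factor (2*α - τ + k) (-ξ) p2
  obtain ⟨r4, hr4, e4⟩ := polar_factor (1 + τ + k) ξ p4
  have E1 : uu1 α τ ξ + (k : ℂ)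
      = (r1 : ℂ) * Complex.exp ((Real.arctan (-ξ / (α - τ + k)) : ℝ) * Complex.I) := by
    rw [← e1]; unfold uu1; push_cast; ring
  have E2 : vv3 α τ ξ + (k : ℂ)
      = (r2 : ℂ) * Complex.exp ((Real.arctan (ξ / (1 - α + τ + k)) : ℝ) * Complex.I) := by
    rw [← e2]; unfold vv3; push_cast; ring
  have E3 : uu2 α τ ξ + (k : ℂ)
      = (r3 : ℂ) * Complex.exp ((Real.arctan (-ξ / (2*α - τ + k)) : ℝ) * Complex.I) := by
    rw [← e3]; unfold uu2; push_cast; ring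
  have E4 : vv4 α τ ξ + (k : ℂ)
      = (r4 : ℂ) * Complex.exp ((Real.arctan (ξ / (1 + τ + k)) : ℝ) * Complex.I) := by
    rw [← e4]; unfold vv4; push_cast; ring
  have C1 : (((2*α : ℝ) : ℂ) + k) = ((2*α + k : ℝ) : ℂ) * Complex.exp (((0:ℝ) : ℂ) * Complex.I) := by
    push_cast; simp
  have C2 : ((1 : ℂ) + k) = ((1 + k : ℝ) : ℂ) * Complex.exp (((0:ℝ) : ℂ) * Complex.I) := by
    push_cast; simp
  have C3 : (((α : ℝ) : ℂ) + k) = ((α + k : ℝ) : ℂ) * Complex.exp (((0:ℝ) : ℂ) * Complex.I) := by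
    push_cast; simp
  have C4 : (((1 - α : ℝ) : ℂ) + k) = ((1 - α + k : ℝ) : ℂ) * Complex.exp (((0:ℝ) : ℂ) * Complex.I) := by
    push_cast; simp
  have Enum := polar_mul (polar_mul (polar_mul E1 E2) C1) C2
  have Eden := polar_mul (polar_mul (polar_mul E3 E4) C3) C4
  have Ediv := polar_div Enum Eden
  refine ⟨(r1 * r2 * (2*α + k) * (1 + k)) / (r3 * r4 * (α + k) * (1 - α + k)), by positivity, ?_⟩
  rw [qq, Ediv]
  congr 2
  rw [phi]
  rw [neg_div, neg_div, Real.arctan_neg, Real.arctan_neg]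
  ring

lemma phi_neg (hα : 0 < α) (hα' : α < 1/2) (hξ : 0 < ξ) (hτ : 0 < τ) (hτ' : τ < α)
    (k : ℕ) : phi α τ ξ k < 0 := by
  have hk : (0:ℝ) ≤ (k:ℝ) := Nat.cast_nonneg k
  have h := arctan_diff_strict (xi := ξ) (c := α) (x := α - τ + k) (y := 1 - α + τ + k)
    hξ hα (by linarith) (by linarith)
  have e1 : (1 - α + τ + (k:ℝ)) + α = 1 + τ + k := by ring
  have e2 : (α - τ + (k:ℝ)) + α = 2*α - τ + k := by ring
  rw [e1, e2] at h
  rw [phi]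
  linarith

lemma phi_lower (hα : 0 < α) (hα' : α < 1/2) (hξ : 0 < ξ) (hτ : 0 < τ) (hτ' : τ < α)
    (k : ℕ) : Real.arctan (ξ / (α - τ + k + 1)) - Real.arctan (ξ / (α - τ + k))
      ≤ phi α τ ξ k := by
  have hk : (0:ℝ) ≤ (k:ℝ) := Nat.cast_nonneg k
  have h1 : Real.arctan (ξ / (α - τ + k + 1)) ≤ Real.arctan (ξ / (2*α - τ + k)) :=
    arctan_div_anti hξ.le (by linarith) (by linarith)
  have h2 : Real.arctan (ξ / (1 + τ + k)) ≤ Real.arctan (ξ / (1 - α + τ + k)) :=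
    arctan_div_anti hξ.le (by linarith) (by linarith)
  rw [phi]
  linarith

lemma sum_phi_nonpos (hα : 0 < α) (hα' : α < 1/2) (hξ : 0 < ξ) (hτ : 0 < τ) (hτ' : τ < α)
    (s N : ℕ) : ∑ k ∈ Finset.range N, phi α τ ξ (s + k) ≤ 0 :=
  Finset.sum_nonpos fun k _ => (phi_neg hα hα' hξ hτ hτ' (s + k)).le

lemma sum_phi_lower (hα : 0 < α) (hα' : α < 1/2) (hξ : 0 < ξ) (hτ : 0 < τ) (hτ' : τ < α)
    (s N : ℕ) : -(Real.pi/2) < ∑ k ∈ Finset.range N, phi α τ ξ (s + k) := by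
  set f : ℕ → ℝ := fun k => Real.arctan (ξ / (α - τ + (s + k : ℕ))) with hf
  have key : ∀ k ∈ Finset.range N, -(phi α τ ξ (s + k)) ≤ f k - f (k+1) := by
    intro k _
    have h := phi_lower hα hα' hξ hτ hτ' (s + k)
    have e : (α - τ + ((s + k : ℕ) : ℝ)) + 1 = α - τ + ((s + (k+1) : ℕ) : ℝ) := by
      push_cast; ring
    rw [hf]
    simp only []
    rw [← e]
    linarith [h]
  have tele : ∑ k ∈ Finset.range N, (f k - f (k+1)) = f 0 - f N :=
    Finset.sum_range_sub' f N
  have hsum : ∑ k ∈ Finset.range N, -(phi α τ ξ (s + k))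
      ≤ ∑ k ∈ Finset.range N, (f k - f (k+1)) := Finset.sum_le_sum key
  rw [tele, Finset.sum_neg_distrib] at hsum
  have hf0 : f 0 < Real.pi/2 := Real.arctan_lt_pi_div_two _
  have hfN : 0 ≤ f N := by
    have hk : (0:ℝ) ≤ ((s + N : ℕ) : ℝ) := Nat.cast_nonneg _
    have h0 : Real.arctan 0 ≤ Real.arctan (ξ / (α - τ + ((s + N : ℕ) : ℝ))) :=
      Real.arctan_strictMono.monotone (div_nonneg hξ.le (by linarith))
    rw [Real.arctan_zero] at h0
    exact h0
  linarith

lemma prod_qq_polar (hα : 0 < α) (hα' : α < 1/2) (hξ : 0 < ξ) (hτ : 0 < τ) (hτ' : τ < α)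
    (s N : ℕ) : ∃ R : ℝ, 0 < R ∧ ∏ k ∈ Finset.range N, qq α τ ξ (s + k)
      = (R : ℂ) * Complex.exp (((∑ k ∈ Finset.range N, phi α τ ξ (s + k)) : ℝ) * Complex.I) := by
  induction N with
  | zero => exact ⟨1, one_pos, by simp⟩
  | succ n ih =>
    obtain ⟨R, hR, hRe⟩ := ih
    obtain ⟨r, hr, hre⟩ := qq_polar hα hα' hξ hτ hτ' (s + n)
    refine ⟨R * r, by positivity, ?_⟩
    rw [Finset.prod_range_succ, Finset.sum_range_succ]
    exact polar_mul hRe hre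

lemma prod_qq_quadrant (hα : 0 < α) (hα' : α < 1/2) (hξ : 0 < ξ) (hτ : 0 < τ) (hτ' : τ < α)
    (s N : ℕ) : 0 ≤ (∏ k ∈ Finset.range N, qq α τ ξ (s + k)).re
      ∧ (∏ k ∈ Finset.range N, qq α τ ξ (s + k)).im ≤ 0 := by
  obtain ⟨R, hR, hRe⟩ := prod_qq_polar hα hα' hξ hτ hτ' s N
  have h1 := sum_phi_nonpos hα hα' hξ hτ hτ' s N
  have h2 := sum_phi_lower hα hα' hξ hτ hτ' s N
  rw [hRe, polar_re, polar_im]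
  have hpi := Real.pi_pos
  constructor
  · exact mul_nonneg hR.le (Real.cos_nonneg_of_mem_Icc ⟨by linarith, by linarith⟩)
  · exact mul_nonpos_of_nonneg_of_nonpos hR.le
      (Real.sin_nonpos_of_nonpos_of_neg_pi_le h1 (by linarith))

lemma qq_zero_quadrant (hα : 0 < α) (hα' : α < 1/2) (hξ : 0 < ξ) (hτ : 0 < τ) (hτ' : τ < α) :
    0 < (qq α τ ξ 0).re ∧ (qq α τ ξ 0).im < 0 := by
  obtain ⟨r, hr, hre⟩ := qq_polar hα hα' hξ hτ hτ' 0
  have h1 : phi α τ ξ 0 < 0 := phi_neg hα hα' hξ hτ hτ' 0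
  have h2 : -(Real.pi/2) < phi α τ ξ 0 := by
    have := sum_phi_lower hα hα' hξ hτ hτ' 0 1
    simpa using this
  rw [hre, polar_re, polar_im]
  constructor
  · exact mul_pos hr (Real.cos_pos_of_mem_Ioo ⟨by linarith, by linarith [Real.pi_pos]⟩)
  · exact mul_neg_of_pos_of_neg hr
      (Real.sin_neg_of_neg_of_neg_pi_lt h1 (by linarith [Real.pi_pos]))

end main
noncomputable def AA (α τ ξ : ℝ) (n : ℕ) : ℂ :=
  (Complex.GammaSeq (uu2 α τ ξ) n * Complex.GammaSeq (vv4 α τ ξ) n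
      * Complex.GammaSeq ((α : ℝ) : ℂ) n * Complex.GammaSeq (((1 - α : ℝ)) : ℂ) n) /
  (Complex.GammaSeq (uu1 α τ ξ) n * Complex.GammaSeq (vv3 α τ ξ) n
      * Complex.GammaSeq (((2 * α : ℝ)) : ℂ) n * Complex.GammaSeq 1 n)

section main2
variable {α τ ξ : ℝ}

lemma AA_eq_prod (hα : 0 < α) (hα' : α < 1/2) (hξ : 0 < ξ) (hτ : 0 < τ) (hτ' : τ < α)
    {n : ℕ} (hn : n ≠ 0) :
    AA α τ ξ n = ∏ k ∈ Finset.range (n+1), qq α τ ξ k := by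
  have hne : (n : ℂ) ≠ 0 := Nat.cast_ne_zero.mpr hn
  have hu1 : ∀ j : ℕ, uu1 α τ ξ + (j : ℂ) ≠ 0 := by
    intro j h
    have h2 := congrArg Complex.im h
    simp [uu1] at h2
    linarith
  have hu2 : ∀ j : ℕ, uu2 α τ ξ + (j : ℂ) ≠ 0 := by
    intro j h
    have h2 := congrArg Complex.im h
    simp [uu2] at h2
    linarith
  have hv3 : ∀ j : ℕ, vv3 α τ ξ + (j : ℂ) ≠ 0 := by
    intro j h
    have h2 := congrArg Complex.im h
    simp [vv3] at h2
    linarith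
  have hv4 : ∀ j : ℕ, vv4 α τ ξ + (j : ℂ) ≠ 0 := by
    intro j h
    have h2 := congrArg Complex.im h
    simp [vv4] at h2
    linarith
  have hc : ∀ c : ℝ, 0 < c → ∀ j : ℕ, ((c : ℝ) : ℂ) + (j : ℂ) ≠ 0 := by
    intro c hcpos j h
    have h2 := congrArg Complex.re h
    simp at h2
    have h3 : (0:ℝ) ≤ (j : ℝ) := Nat.cast_nonneg j
    linarith
  have h1c : ∀ j : ℕ, (1 : ℂ) + (j : ℂ) ≠ 0 := by
    intro j
    have := hc 1 one_pos j
    simpa using this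
  have hP1 : (∏ j ∈ Finset.range (n+1), (uu1 α τ ξ + (j:ℂ))) ≠ 0 :=
    Finset.prod_ne_zero_iff.mpr fun j _ => hu1 j
  have hP2 : (∏ j ∈ Finset.range (n+1), (uu2 α τ ξ + (j:ℂ))) ≠ 0 :=
    Finset.prod_ne_zero_iff.mpr fun j _ => hu2 j
  have hP3 : (∏ j ∈ Finset.range (n+1), (vv3 α τ ξ + (j:ℂ))) ≠ 0 :=
    Finset.prod_ne_zero_iff.mpr fun j _ => hv3 j
  have hP4 : (∏ j ∈ Finset.range (n+1), (vv4 α τ ξ + (j:ℂ))) ≠ 0 :=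
    Finset.prod_ne_zero_iff.mpr fun j _ => hv4 j
  have hPA : (∏ j ∈ Finset.range (n+1), (((2*α:ℝ):ℂ) + (j:ℂ))) ≠ 0 :=
    Finset.prod_ne_zero_iff.mpr fun j _ => hc (2*α) (by linarith) j
  have hPB : (∏ j ∈ Finset.range (n+1), ((1:ℂ) + (j:ℂ))) ≠ 0 :=
    Finset.prod_ne_zero_iff.mpr fun j _ => h1c j
  have hPC : (∏ j ∈ Finset.range (n+1), (((α:ℝ):ℂ) + (j:ℂ))) ≠ 0 :=
    Finset.prod_ne_zero_iff.mpr fun j _ => hc α hα j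
  have hPD : (∏ j ∈ Finset.range (n+1), (((1-α:ℝ):ℂ) + (j:ℂ))) ≠ 0 :=
    Finset.prod_ne_zero_iff.mpr fun j _ => hc (1-α) (by linarith) j
  have hfact : ((Nat.factorial n : ℕ) : ℂ) ≠ 0 := Nat.cast_ne_zero.mpr (Nat.factorial_ne_zero n)
  have hcp : ∀ z : ℂ, (n:ℂ) ^ z ≠ 0 := by
    intro z h
    rw [Complex.cpow_eq_zero_iff] at h
    exact hne h.1
  have key : (n:ℂ) ^ (uu2 α τ ξ) * (n:ℂ) ^ (vv4 α τ ξ) * (n:ℂ) ^ (((α:ℝ)):ℂ)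
        * (n:ℂ) ^ (((1-α:ℝ)):ℂ)
      = (n:ℂ) ^ (uu1 α τ ξ) * (n:ℂ) ^ (vv3 α τ ξ) * (n:ℂ) ^ (((2*α:ℝ)):ℂ)
        * (n:ℂ) ^ ((1:ℂ)) := by
    rw [← Complex.cpow_add _ _ hne, ← Complex.cpow_add _ _ hne, ← Complex.cpow_add _ _ hne,
        ← Complex.cpow_add _ _ hne, ← Complex.cpow_add _ _ hne, ← Complex.cpow_add _ _ hne]
    congr 1
    simp only [uu1, uu2, vv3, vv4]
    push_cast
    ring
  have hprod : ∏ k ∈ Finset.range (n+1), qq α τ ξ k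
      = ((∏ j ∈ Finset.range (n+1), (uu1 α τ ξ + (j:ℂ)))
          * (∏ j ∈ Finset.range (n+1), (vv3 α τ ξ + (j:ℂ)))
          * (∏ j ∈ Finset.range (n+1), (((2*α:ℝ):ℂ) + (j:ℂ)))
          * (∏ j ∈ Finset.range (n+1), ((1:ℂ) + (j:ℂ))))
        / ((∏ j ∈ Finset.range (n+1), (uu2 α τ ξ + (j:ℂ)))
          * (∏ j ∈ Finset.range (n+1), (vv4 α τ ξ + (j:ℂ)))
          * (∏ j ∈ Finset.range (n+1), (((α:ℝ):ℂ) + (j:ℂ)))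
          * (∏ j ∈ Finset.range (n+1), (((1-α:ℝ):ℂ) + (j:ℂ)))) := by
    simp only [qq, Finset.prod_div_distrib, Finset.prod_mul_distrib]
  rw [hprod]
  simp only [AA, Complex.GammaSeq]
  rw [div_mul_div_comm, div_mul_div_comm, div_mul_div_comm, div_mul_div_comm, div_mul_div_comm,
    div_mul_div_comm]
  rw [div_div_div_comm]
  have hXZ : (↑n : ℂ) ^ uu2 α τ ξ * ↑(Nat.factorial n) * ((↑n:ℂ) ^ vv4 α τ ξ * ↑(Nat.factorial n))
        * ((↑n:ℂ) ^ ((α:ℝ):ℂ) * ↑(Nat.factorial n)) * ((↑n:ℂ) ^ (((1-α:ℝ)):ℂ) * ↑(Nat.factorial n))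
      = (↑n:ℂ) ^ uu1 α τ ξ * ↑(Nat.factorial n) * ((↑n:ℂ) ^ vv3 α τ ξ * ↑(Nat.factorial n))
        * ((↑n:ℂ) ^ (((2*α:ℝ)):ℂ) * ↑(Nat.factorial n)) * ((↑n:ℂ) ^ (1:ℂ) * ↑(Nat.factorial n)) := by
    linear_combination ((Nat.factorial n : ℕ) : ℂ)^4 * key
  have hZne : (↑n:ℂ) ^ uu1 α τ ξ * ↑(Nat.factorial n) * ((↑n:ℂ) ^ vv3 α τ ξ * ↑(Nat.factorial n))
        * ((↑n:ℂ) ^ (((2*α:ℝ)):ℂ) * ↑(Nat.factorial n)) * ((↑n:ℂ) ^ (1:ℂ) * ↑(Nat.factorial n)) ≠ 0 := by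
    apply_rules [mul_ne_zero, hcp, hfact]
  rw [hXZ, div_self hZne, one_div_div]

end main2
section main3
variable {α τ ξ : ℝ}

lemma sin_pi_mul_ne_zero' {u : ℂ} (hu : u.im ≠ 0) : Complex.sin ((Real.pi : ℂ) * u) ≠ 0 := by
  intro h
  rw [Complex.sin_eq_zero_iff] at h
  obtain ⟨k, hk⟩ := h
  have h2 := congrArg Complex.im hk
  simp [Complex.mul_im] at h2
  exact hu h2

lemma sin_eq_pi_div_Gamma {u : ℂ} (hGne : Complex.Gamma u * Complex.Gamma (1-u) ≠ 0)
    (hsne : Complex.sin ((Real.pi : ℂ) * u) ≠ 0) :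
    Complex.sin ((Real.pi : ℂ) * u) = (Real.pi : ℂ) / (Complex.Gamma u * Complex.Gamma (1-u)) := by
  have r := Complex.Gamma_mul_Gamma_one_sub u
  rw [eq_div_iff hsne] at r
  rw [eq_div_iff hGne]
  linear_combination r

lemma Gamma_facts (hα : 0 < α) (hα' : α < 1/2) (hξ : 0 < ξ) (hτ : 0 < τ) (hτ' : τ < α) :
    Complex.Gamma (uu1 α τ ξ) ≠ 0 ∧ Complex.Gamma (uu2 α τ ξ) ≠ 0
      ∧ Complex.Gamma (vv3 α τ ξ) ≠ 0 ∧ Complex.Gamma (vv4 α τ ξ) ≠ 0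
      ∧ Complex.Gamma (1 - uu1 α τ ξ) ≠ 0 ∧ Complex.Gamma (1 - uu2 α τ ξ) ≠ 0
      ∧ Complex.Gamma ((α : ℝ) : ℂ) ≠ 0 ∧ Complex.Gamma (((1-α : ℝ)) : ℂ) ≠ 0
      ∧ Complex.Gamma (((2*α : ℝ)) : ℂ) ≠ 0 := by
  refine ⟨?_, ?_, ?_, ?_, ?_, ?_, ?_, ?_, ?_⟩ <;>
    apply Complex.Gamma_ne_zero_of_re_pos <;>
    simp [uu1, uu2, vv3, vv4] <;> linarith

lemma Ts_eq (hα : 0 < α) (hα' : α < 1/2) (hξ : 0 < ξ) (hτ : 0 < τ) (hτ' : τ < α) :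
    Ts α τ ξ = (Complex.Gamma (uu2 α τ ξ) * Complex.Gamma (1 - uu2 α τ ξ))
      / (Complex.Gamma (uu1 α τ ξ) * Complex.Gamma (1 - uu1 α τ ξ)) := by
  obtain ⟨g1, g2, g3, g4, g5, g6, g7, g8, g9⟩ := Gamma_facts hα hα' hξ hτ hτ'
  have hπ : ((Real.pi : ℝ) : ℂ) ≠ 0 := Complex.ofReal_ne_zero.mpr Real.pi_ne_zero
  have him1 : (uu1 α τ ξ).im ≠ 0 := by simp [uu1]; exact hξ.ne'
  have him2 : (uu2 α τ ξ).im ≠ 0 := by simp [uu2]; exact hξ.ne'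
  have hs1 := sin_pi_mul_ne_zero' him1
  have hs2 := sin_pi_mul_ne_zero' him2
  have harg1 : (Real.pi : ℂ) * (1 - (τ : ℂ) + (α : ℂ) - Complex.I * (ξ : ℂ))
      = (Real.pi : ℂ) * uu1 α τ ξ + (Real.pi : ℂ) := by
    simp only [uu1]; push_cast; ring
  have harg2 : (Real.pi : ℂ) * (1 - (τ : ℂ) + 2 * (α : ℂ) - Complex.I * (ξ : ℂ))
      = (Real.pi : ℂ) * uu2 α τ ξ + (Real.pi : ℂ) := by
    simp only [uu2]; push_cast; ring
  have e1 := sin_eq_pi_div_Gamma (mul_ne_zero g1 g5) hs1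
  have e2 := sin_eq_pi_div_Gamma (mul_ne_zero g2 g6) hs2
  rw [Ts, harg1, harg2, Complex.sin_add_pi, Complex.sin_add_pi, neg_div_neg_eq, e1, e2,
    div_div_div_comm, div_self hπ, one_div_div]

lemma TB_eq (hα : 0 < α) (hα' : α < 1/2) (hξ : 0 < ξ) (hτ : 0 < τ) (hτ' : τ < α) :
    TB α τ ξ = Complex.Gamma (1 - uu2 α τ ξ) * Complex.Gamma (((2*α : ℝ)) : ℂ)
      / (Complex.Gamma ((α : ℝ) : ℂ) * Complex.Gamma (((1-α : ℝ)) : ℂ)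
          * Complex.Gamma (vv4 α τ ξ)) := by
  obtain ⟨g1, g2, g3, g4, g5, g6, g7, g8, g9⟩ := Gamma_facts hα hα' hξ hτ hτ'
  have hπ : ((Real.pi : ℝ) : ℂ) ≠ 0 := Complex.ofReal_ne_zero.mpr Real.pi_ne_zero
  have hpi := Real.pi_pos
  have e1 : (τ : ℂ) - 2 * (α : ℂ) + 1 + Complex.I * (ξ : ℂ) = 1 - uu2 α τ ξ := by
    simp only [uu2]; push_cast; ring
  have e2 : (τ : ℂ) + 1 + Complex.I * (ξ : ℂ) = vv4 α τ ξ := by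
    simp only [vv4]; push_cast; ring
  have e3 : 2 * (α : ℂ) = ((2*α : ℝ) : ℂ) := by push_cast; ring
  have e4 : (1 : ℂ) - ((α : ℝ) : ℂ) = (((1-α : ℝ)) : ℂ) := by push_cast; ring
  have hsa : Complex.sin ((Real.pi : ℂ) * ((α : ℝ) : ℂ)) ≠ 0 := by
    rw [show (Real.pi : ℂ) * ((α : ℝ) : ℂ) = ((Real.pi * α : ℝ) : ℂ) by push_cast; ring,
      ← Complex.ofReal_sin]
    rw [Complex.ofReal_ne_zero]
    have : 0 < Real.sin (Real.pi * α) :=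
      Real.sin_pos_of_pos_of_lt_pi (by positivity) (by nlinarith)
    exact this.ne'
  have e5 := sin_eq_pi_div_Gamma (u := ((α : ℝ) : ℂ)) (by rw [e4]; exact mul_ne_zero g7 g8) hsa
  rw [e4] at e5
  have g8' : Complex.Gamma (1 - (α:ℂ)) ≠ 0 := by rwa [e4]
  have g9' : Complex.Gamma ((α:ℂ) * 2) ≠ 0 := by
    rwa [show ((α:ℂ) * 2) = ((2*α : ℝ) : ℂ) by push_cast; ring]
  rw [TB, e1, e2, e3, e5]
  field_simp [hπ, g4, g6, g7, g8', g9']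

lemma Ts_ne_zero (hα : 0 < α) (hα' : α < 1/2) (hξ : 0 < ξ) (hτ : 0 < τ) (hτ' : τ < α) :
    Ts α τ ξ ≠ 0 := by
  obtain ⟨g1, g2, g3, g4, g5, g6, g7, g8, g9⟩ := Gamma_facts hα hα' hξ hτ hτ'
  rw [Ts_eq hα hα' hξ hτ hτ']
  exact div_ne_zero (mul_ne_zero g2 g6) (mul_ne_zero g1 g5)

lemma TB_ne_zero (hα : 0 < α) (hα' : α < 1/2) (hξ : 0 < ξ) (hτ : 0 < τ) (hτ' : τ < α) :
    TB α τ ξ ≠ 0 := by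
  obtain ⟨g1, g2, g3, g4, g5, g6, g7, g8, g9⟩ := Gamma_facts hα hα' hξ hτ hτ'
  rw [TB_eq hα hα' hξ hτ hτ']
  exact div_ne_zero (mul_ne_zero g6 g9) (mul_ne_zero (mul_ne_zero g7 g8) g4)

lemma L_eq (hα : 0 < α) (hα' : α < 1/2) (hξ : 0 < ξ) (hτ : 0 < τ) (hτ' : τ < α) :
    Ts α τ ξ / TB α τ ξ
      = (Complex.Gamma (uu2 α τ ξ) * Complex.Gamma (vv4 α τ ξ) * Complex.Gamma ((α : ℝ) : ℂ)
          * Complex.Gamma (((1-α : ℝ)) : ℂ))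
        / (Complex.Gamma (uu1 α τ ξ) * Complex.Gamma (vv3 α τ ξ)
          * Complex.Gamma (((2*α : ℝ)) : ℂ) * Complex.Gamma 1) := by
  obtain ⟨g1, g2, g3, g4, g5, g6, g7, g8, g9⟩ := Gamma_facts hα hα' hξ hτ hτ'
  have ev : (1 : ℂ) - uu1 α τ ξ = vv3 α τ ξ := by
    simp only [uu1, vv3]; push_cast; ring
  rw [Ts_eq hα hα' hξ hτ hτ', TB_eq hα hα' hξ hτ hτ', ev, Complex.Gamma_one]
  rw [ev] at g5
  have g8' : Complex.Gamma (1 - (α:ℂ)) ≠ 0 := by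
    rwa [show (1 - (α:ℂ)) = ((1-α : ℝ) : ℂ) by push_cast; ring]
  have g9' : Complex.Gamma ((α:ℂ) * 2) ≠ 0 := by
    rwa [show ((α:ℂ) * 2) = ((2*α : ℝ) : ℂ) by push_cast; ring]
  field_simp [g1, g2, g3, g4, g5, g6, g7, g8', g9']

lemma AA_tendsto (hα : 0 < α) (hα' : α < 1/2) (hξ : 0 < ξ) (hτ : 0 < τ) (hτ' : τ < α) :
    Filter.Tendsto (AA α τ ξ) Filter.atTop (nhds (Ts α τ ξ / TB α τ ξ)) := by
  obtain ⟨g1, g2, g3, g4, g5, g6, g7, g8, g9⟩ := Gamma_facts hα hα' hξ hτ hτ'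
  rw [L_eq hα hα' hξ hτ hτ']
  apply Filter.Tendsto.div
  · exact (((Complex.GammaSeq_tendsto_Gamma _).mul (Complex.GammaSeq_tendsto_Gamma _)).mul
      (Complex.GammaSeq_tendsto_Gamma _)).mul (Complex.GammaSeq_tendsto_Gamma _)
  · exact (((Complex.GammaSeq_tendsto_Gamma _).mul (Complex.GammaSeq_tendsto_Gamma _)).mul
      (Complex.GammaSeq_tendsto_Gamma _)).mul (Complex.GammaSeq_tendsto_Gamma _)
  · rw [Complex.Gamma_one]
    exact mul_ne_zero (mul_ne_zero (mul_ne_zero g1 g3) g9) one_ne_zero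

lemma im_L_neg (hα : 0 < α) (hα' : α < 1/2) (hξ : 0 < ξ) (hτ : 0 < τ) (hτ' : τ < α) :
    (Ts α τ ξ / TB α τ ξ).im < 0 := by
  have hq0 := qq_zero_quadrant hα hα' hξ hτ hτ'
  have hq0ne : qq α τ ξ 0 ≠ 0 := by
    intro h
    rw [h] at hq0
    simp at hq0
  have hLne : Ts α τ ξ / TB α τ ξ ≠ 0 :=
    div_ne_zero (Ts_ne_zero hα hα' hξ hτ hτ') (TB_ne_zero hα hα' hξ hτ hτ')
  -- the full product tends to L
  have hprodten : Filter.Tendsto (fun n => ∏ k ∈ Finset.range (n+1), qq α τ ξ k)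
      Filter.atTop (nhds (Ts α τ ξ / TB α τ ξ)) := by
    apply (AA_tendsto hα hα' hξ hτ hτ').congr'
    filter_upwards [Filter.eventually_ge_atTop 1] with n hn
    exact AA_eq_prod hα hα' hξ hτ hτ' (by omega)
  -- tail products
  have htailEq : ∀ N : ℕ, ∏ k ∈ Finset.range N, qq α τ ξ (1 + k)
      = (∏ k ∈ Finset.range (N+1), qq α τ ξ k) / qq α τ ξ 0 := by
    intro N
    rw [Finset.prod_range_succ']
    rw [mul_div_assoc, div_self hq0ne, mul_one]
    exact Finset.prod_congr rfl fun x _ => by rw [add_comm]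
  have htailten : Filter.Tendsto (fun N => ∏ k ∈ Finset.range N, qq α τ ξ (1 + k))
      Filter.atTop (nhds ((Ts α τ ξ / TB α τ ξ) / qq α τ ξ 0)) := by
    have := hprodten.div_const (qq α τ ξ 0)
    apply this.congr
    intro N
    exact (htailEq N).symm
  set P := (Ts α τ ξ / TB α τ ξ) / qq α τ ξ 0 with hP
  have hPre : 0 ≤ P.re := by
    apply ge_of_tendsto ((Complex.continuous_re.tendsto P).comp htailten)
    filter_upwards with N
    exact (prod_qq_quadrant hα hα' hξ hτ hτ' 1 N).1
  have hPim : P.im ≤ 0 := by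
    apply le_of_tendsto ((Complex.continuous_im.tendsto P).comp htailten)
    filter_upwards with N
    exact (prod_qq_quadrant hα hα' hξ hτ hτ' 1 N).2
  have hPne : P ≠ 0 := div_ne_zero hLne hq0ne
  have hLP : Ts α τ ξ / TB α τ ξ = qq α τ ξ 0 * P := by
    rw [hP, mul_div_cancel₀]
    exact hq0ne
  rw [hLP, Complex.mul_im]
  rcases lt_or_eq_of_le hPre with h | h
  · have t1 : (qq α τ ξ 0).re * P.im ≤ 0 := mul_nonpos_of_nonneg_of_nonpos hq0.1.le hPim
    have t2 : (qq α τ ξ 0).im * P.re < 0 := mul_neg_of_neg_of_pos hq0.2 h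
    linarith
  · have hPimne : P.im ≠ 0 := by
      intro h2
      apply hPne
      apply Complex.ext
      · exact h.symm
      · exact h2
    have t1 : (qq α τ ξ 0).re * P.im < 0 :=
      mul_neg_of_pos_of_neg hq0.1 (lt_of_le_of_ne hPim hPimne)
    have t2 : (qq α τ ξ 0).im * P.re = 0 := by rw [← h, mul_zero]
    linarith

end main3

/-- For `0 < α < 1/2`, `ξ > 0` and `0 < τ < α`, the principal arguments of `T_s` and `T_B`
differ. -/
theorem arg_Ts_ne_arg_TB_of_tau_lt_alpha
    (α τ ξ : ℝ) (hα : 0 < α) (hα' : α < 1 / 2) (hξ : 0 < ξ) (hτ : 0 < τ) (hτ' : τ < α) :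
    Complex.arg (Ts α τ ξ) ≠ Complex.arg (TB α τ ξ) := by
  intro h
  have hα2 : α < 1/2 := hα'
  have hIm := im_L_neg hα hα2 hξ hτ hτ'
  have hTB := TB_ne_zero hα hα2 hξ hτ hτ'
  have hTBabs : ((‖TB α τ ξ‖ : ℝ) : ℂ) ≠ 0 := by
    rw [Complex.ofReal_ne_zero]
    exact (norm_ne_zero_iff.mpr hTB)
  have hTs := Ts_ne_zero hα hα2 hξ hτ hτ'
  have h' := (Complex.arg_eq_arg_iff hTs hTB).mp h
  have him0 : (Ts α τ ξ / TB α τ ξ).im = 0 := by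
    rw [← h', mul_comm, ← div_div, div_self hTs, one_div, inv_div, ← Complex.ofReal_div]
    exact Complex.ofReal_im _
  linarith
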